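/- Let p be a polynomial and f a polynomial vector field on ℝ^n. For the backward flow: IvIn_f({x : p(x) > 0}) = {x : γ_{p,f}(x) < ∞ and (−1)^{γ_{p,f}(x)} · L^{γ_{p,f}(x)}_f p(x) > 0}, and IvIn_f({x : p(x) ≥ 0}) equals this set union Γ₀(p,f). In particular both are semi-algebraic sets. -/

import Mathlib

/-- The Lie derivative of a polynomial `p` along the polynomial vector field `f`. -/
noncomputable def lieDeriv {n : ℕ} (f : Fin n → MvPolynomial (Fin n) ℝ)
    (p : MvPolynomial (Fin n) ℝ) : MvPolynomial (Fin n) ℝ :=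
  ∑ j, MvPolynomial.pderiv j p * f j

/-- Iterated Lie derivatives: `lieIter f k p = L^k_f p`. -/
noncomputable def lieIter {n : ℕ} (f : Fin n → MvPolynomial (Fin n) ℝ)
    (k : ℕ) (p : MvPolynomial (Fin n) ℝ) : MvPolynomial (Fin n) ℝ :=
  match k with
  | 0 => p
  | k + 1 => lieDeriv f (lieIter f k p)

/-- `φ` is a global flow of the polynomial vector field `f`. -/
def IsPolyFlow {n : ℕ} (f : Fin n → MvPolynomial (Fin n) ℝ)
    (φ : (Fin n → ℝ) → ℝ → (Fin n → ℝ)) : Prop :=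
  (∀ x₀, φ x₀ 0 = x₀) ∧
    ∀ x₀ t (i : Fin n),
      HasDerivAt (fun s => φ x₀ s i) (MvPolynomial.eval (φ x₀ t) (f i)) t

/-- `In_f(A)`: points whose forward trajectory enters `A` immediately. -/
def InSet {n : ℕ} (φ : (Fin n → ℝ) → ℝ → (Fin n → ℝ)) (A : Set (Fin n → ℝ)) :
    Set (Fin n → ℝ) :=
  {x₀ | ∃ ε > 0, ∀ t ∈ Set.Ioo (0:ℝ) ε, φ x₀ t ∈ A}

/-- `IvIn_f(A)`: points whose backward trajectory comes from inside `A`. -/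
def IvInSet {n : ℕ} (φ : (Fin n → ℝ) → ℝ → (Fin n → ℝ)) (A : Set (Fin n → ℝ)) :
    Set (Fin n → ℝ) :=
  {x₀ | ∃ ε > 0, ∀ t ∈ Set.Ioo (0:ℝ) ε, φ x₀ (-t) ∈ A}

/-- `Γ₀(p,f)`: points where all Lie derivatives of `p` along `f` vanish. -/
def Gamma0 {n : ℕ} (f : Fin n → MvPolynomial (Fin n) ℝ)
    (p : MvPolynomial (Fin n) ℝ) : Set (Fin n → ℝ) :=
  {x | ∀ k : ℕ, MvPolynomial.eval x (lieIter f k p) = 0}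

/-- `Γ₊(p,f)`: points of finite pointwise rank whose first nonzero Lie
derivative is positive. -/
def GammaPlus {n : ℕ} (f : Fin n → MvPolynomial (Fin n) ℝ)
    (p : MvPolynomial (Fin n) ℝ) : Set (Fin n → ℝ) :=
  {x | ∃ k : ℕ, (∀ j < k, MvPolynomial.eval x (lieIter f j p) = 0) ∧
        0 < MvPolynomial.eval x (lieIter f k p)}

open MvPolynomial in
theorem lieDeriv_C {n : ℕ} (f : Fin n → MvPolynomial (Fin n) ℝ) (a : ℝ) :
    lieDeriv f (C a) = 0 := by
  simp [lieDeriv, pderiv_C]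

open MvPolynomial in
theorem lieDeriv_add {n : ℕ} (f : Fin n → MvPolynomial (Fin n) ℝ) (q r : MvPolynomial (Fin n) ℝ) :
    lieDeriv f (q + r) = lieDeriv f q + lieDeriv f r := by
  simp [lieDeriv, map_add, add_mul, Finset.sum_add_distrib]

open MvPolynomial in
theorem lieDeriv_mul_X {n : ℕ} (f : Fin n → MvPolynomial (Fin n) ℝ)
    (q : MvPolynomial (Fin n) ℝ) (i : Fin n) :
    lieDeriv f (q * X i) = lieDeriv f q * X i + q * f i := by
  simp only [lieDeriv, pderiv_mul, add_mul, Finset.sum_add_distrib, Finset.mul_sum,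
    Finset.sum_mul]
  congr 1
  · apply Finset.sum_congr rfl; intro j _; ring
  · rw [Finset.sum_eq_single i]
    · simp
    · intro j _ hj; simp [pderiv_X, Pi.single_apply, hj]
    · simp

open MvPolynomial in
theorem eval_flow_hasDerivAt {n : ℕ} {f : Fin n → MvPolynomial (Fin n) ℝ}
    {φ : (Fin n → ℝ) → ℝ → (Fin n → ℝ)} (hφ : IsPolyFlow f φ)
    (x₀ : Fin n → ℝ) (q : MvPolynomial (Fin n) ℝ) (t : ℝ) :
    HasDerivAt (fun s => MvPolynomial.eval (φ x₀ s) q)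
      (MvPolynomial.eval (φ x₀ t) (lieDeriv f q)) t := by
  induction q using MvPolynomial.induction_on with
  | C a => simpa [lieDeriv_C] using hasDerivAt_const t a
  | add q r hq hr => simpa [lieDeriv_add, Pi.add_def] using hq.add hr
  | mul_X q i hq =>
    have h1 : HasDerivAt (fun s => φ x₀ s i) (MvPolynomial.eval (φ x₀ t) (f i)) t := hφ.2 x₀ t i
    have := hq.mul h1
    simp only [lieDeriv_mul_X, map_add, map_mul, eval_X]
    exact this

open Set in
theorem sign_lemma (k : ℕ) : ∀ (G : ℕ → ℝ → ℝ),
    (∀ j t, HasDerivAt (G j) (G (j+1) t) t) →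
    (∀ j < k, G j 0 = 0) → G k 0 ≠ 0 →
    ∃ ε > 0, ∀ t ∈ Set.Ioo (0:ℝ) ε,
      0 < G k 0 * G 0 t ∧ 0 < (-1:ℝ)^k * (G k 0 * G 0 (-t)) := by
  induction k with
  | zero =>
    intro G hd _ hk
    have hc : ContinuousAt (G 0) 0 := (hd 0 0).continuousAt
    have hev : ∀ᶠ s in nhds (0:ℝ), |G 0 s - G 0 0| < |G 0 0| := by
      have := hc.tendsto
      have h2 := Metric.tendsto_nhds.mp this |G 0 0| (abs_pos.mpr hk)
      simpa [Real.dist_eq] using h2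
    obtain ⟨ε, εpos, hε⟩ := Metric.eventually_nhds_iff.mp hev
    refine ⟨ε, εpos, fun t ht => ?_⟩
    have h1 : |G 0 t - G 0 0| < |G 0 0| := hε (by simp [Real.dist_eq, abs_of_pos ht.1]; exact ht.2)
    have h2 : |G 0 (-t) - G 0 0| < |G 0 0| := by
      apply hε; simp [Real.dist_eq, abs_of_pos ht.1]; exact ht.2
    rcases abs_lt.mp h1 with ⟨h1a, h1b⟩
    rcases abs_lt.mp h2 with ⟨h2a, h2b⟩
    rcases hk.lt_or_gt with hneg | hpos
    · rw [abs_of_neg hneg] at h1a h1b h2a h2b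
      constructor <;> [nlinarith; ·simp; nlinarith]
    · rw [abs_of_pos hpos] at h1a h1b h2a h2b
      constructor <;> [nlinarith; ·simp; nlinarith]
  | succ k ih =>
    intro G hd h0 hk
    obtain ⟨ε, εpos, h⟩ := ih (fun j => G (j+1)) (fun j t => hd (j+1) t)
      (fun j hj => h0 (j+1) (by omega)) hk
    simp only [zero_add] at h
    refine ⟨ε, εpos, fun t ht => ?_⟩
    have hG00 : G 0 0 = 0 := h0 0 (Nat.succ_pos k)
    set a := G (k+1) 0 with ha
    have hcont : ∀ u v : ℝ, ContinuousOn (G 0) (Icc u v) :=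
      fun u v => HasDerivAt.continuousOn (fun x _ => hd 0 x)
    constructor
    · obtain ⟨c, hc, hslope⟩ := exists_hasDerivAt_eq_slope (G 0) (G 1) ht.1
        (hcont 0 t) (fun x _ => hd 0 x)
      have hGt : G 0 t = G 1 c * t := by
        rw [hslope, hG00]
        field_simp [ht.1.ne']
        ring
      have hpos := (h c ⟨hc.1, hc.2.trans ht.2⟩).1
      rw [hGt]
      nlinarith [mul_pos hpos ht.1]
    · have hnt : (-t) < 0 := neg_neg_iff_pos.mpr ht.1
      obtain ⟨c, hc, hslope⟩ := exists_hasDerivAt_eq_slope (G 0) (G 1) hnt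
        (hcont (-t) 0) (fun x _ => hd 0 x)
      have hGt : G 0 (-t) = -(G 1 c * t) := by
        rw [hslope, hG00]
        field_simp [ht.1.ne']
        ring
      have hcmem : -c ∈ Ioo (0:ℝ) ε := ⟨by linarith [hc.2], by linarith [hc.1, ht.2]⟩
      have hpos := (h (-c) hcmem).2
      simp only [neg_neg] at hpos
      rw [hGt, pow_succ]
      nlinarith [mul_pos hpos ht.1]

open MvPolynomial Set Finset in
theorem gamma0_invariant {n : ℕ} {f : Fin n → MvPolynomial (Fin n) ℝ}
    {φ : (Fin n → ℝ) → ℝ → (Fin n → ℝ)} (hφ : IsPolyFlow f φ)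
    (p : MvPolynomial (Fin n) ℝ) (x₀ : Fin n → ℝ)
    (hx : ∀ k, MvPolynomial.eval x₀ (lieIter f k p) = 0) :
    ∀ t : ℝ, MvPolynomial.eval (φ x₀ t) p = 0 := by
  classical
  -- the ascending chain of ideals
  set I : ℕ →o Ideal (MvPolynomial (Fin n) ℝ) :=
    ⟨fun k => Ideal.span ((fun j => lieIter f j p) '' Set.Iic k),
      fun a b hab => Ideal.span_mono (Set.image_mono (Set.Iic_subset_Iic.mpr hab))⟩ with hI
  obtain ⟨N, hN⟩ := monotone_stabilizes_iff_noetherian.mpr inferInstance I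
  have hmem : lieIter f (N+1) p ∈ I N := by
    rw [hN (N+1) (Nat.le_succ N)]
    exact Ideal.subset_span ⟨N+1, Set.mem_Iic.mpr le_rfl, rfl⟩
  obtain ⟨m, c, g, hspan⟩ := Submodule.mem_span_set'.mp hmem
  choose j hjle hjval using fun i => (Set.mem_image _ _ _).mp (g i).2
  -- trajectory Lie derivative functions
  set G : ℕ → ℝ → ℝ := fun k t => MvPolynomial.eval (φ x₀ t) (lieIter f k p) with hG
  have hlis : ∀ k, lieIter f (k+1) p = lieDeriv f (lieIter f k p) := fun k => rfl
  have hd : ∀ k t, HasDerivAt (G k) (G (k+1) t) t := by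
    intro k t
    rw [hG]
    simp only []
    rw [hlis k]
    exact eval_flow_hasDerivAt hφ x₀ (lieIter f k p) t
  have hsum : ∀ t, G (N+1) t = ∑ i, MvPolynomial.eval (φ x₀ t) (c i) * G (j i) t := by
    intro t
    have h1 := congrArg (MvPolynomial.eval (φ x₀ t)) hspan
    rw [map_sum] at h1
    rw [hG]
    simp only []
    rw [← h1]
    refine Finset.sum_congr rfl fun i _ => ?_
    rw [smul_eq_mul, map_mul, hjval i]
  -- the sum of squares
  set w : ℝ → ℝ := fun t => ∑ k ∈ Finset.range (N+1), (G k t)^2 with hwdef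
  have hwnonneg : ∀ t, 0 ≤ w t := fun t => Finset.sum_nonneg fun _ _ => sq_nonneg _
  have hw0 : w 0 = 0 := by
    simp only [hwdef, hG]
    rw [Finset.sum_eq_zero]
    intro k _
    rw [hφ.1, hx k]
    ring
  set w' : ℝ → ℝ := fun t => ∑ k ∈ Finset.range (N+1), 2 * G k t * G (k+1) t with hw'def
  have hw' : ∀ t, HasDerivAt w (w' t) t := by
    intro t
    apply HasDerivAt.fun_sum
    intro k _
    have := (hd k t).pow 2
    convert this using 1
    · rfl
    · rfl
    push_cast
    ring
  -- coefficient bound on compact intervals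
  have hccont : ∀ i, Continuous (fun t => MvPolynomial.eval (φ x₀ t) (c i)) := by
    intro i
    exact continuous_iff_continuousAt.mpr fun t =>
      (eval_flow_hasDerivAt hφ x₀ (c i) t).continuousAt
  set u : ℝ → ℝ := fun t => ∑ i, |MvPolynomial.eval (φ x₀ t) (c i)| with hu
  have hucont : Continuous u := by
    apply continuous_finset_sum
    exact fun i _ => (hccont i).abs
  -- main claim on each interval
  suffices hkey : ∀ b : ℝ, 0 < b → ∀ t ∈ Set.Icc (-b) b, w t = 0 by
    intro t
    have hb : t ∈ Set.Icc (-(|t|+1)) (|t|+1) := by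
      constructor <;> [nlinarith [abs_nonneg t, neg_abs_le t]; nlinarith [le_abs_self t]]
    have hwt := hkey (|t|+1) (by positivity) t hb
    have hsq : (G 0 t)^2 ≤ w t :=
      Finset.single_le_sum (fun i _ => sq_nonneg (G i t)) (Finset.mem_range.mpr (Nat.succ_pos N))
    have : (G 0 t)^2 = 0 := le_antisymm (hwt ▸ hsq) (sq_nonneg _)
    have h0 : G 0 t = 0 := pow_eq_zero_iff (n := 2) (by norm_num) |>.mp this
    rw [hG] at h0
    exact h0
  intro b hb
  -- bound M for coefficients on [-b,b]
  obtain ⟨z, _, hz⟩ := (isCompact_Icc (a := -b) (b := b)).exists_isMaxOn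
    ⟨0, by constructor <;> linarith⟩ hucont.continuousOn
  set M := u z with hM
  have hMnonneg : 0 ≤ M := Finset.sum_nonneg fun _ _ => abs_nonneg _
  set K : ℝ := 2*N + 2*M with hK
  -- the differential inequality
  have hbound : ∀ t ∈ Set.Icc (-b) b, |w' t| ≤ K * w t := by
    intro t ht
    have hprod : ∀ a ∈ Finset.range (N+1), ∀ b' ∈ Finset.range (N+1),
        |G a t * G b' t| ≤ w t := by
      intro a ha b' hb'
      have h1 : (G a t)^2 ≤ w t := Finset.single_le_sum (fun i _ => sq_nonneg (G i t)) ha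
      have h2 : (G b' t)^2 ≤ w t := Finset.single_le_sum (fun i _ => sq_nonneg (G i t)) hb'
      nlinarith [abs_mul (G a t) (G b' t), sq_abs (G a t), sq_abs (G b' t),
        abs_nonneg (G a t), abs_nonneg (G b' t), sq_nonneg (|G a t| - |G b' t|)]
    have hlast : |G N t * G (N+1) t| ≤ M * w t := by
      rw [hsum t, Finset.mul_sum]
      calc |∑ i, G N t * (MvPolynomial.eval (φ x₀ t) (c i) * G (j i) t)|
          ≤ ∑ i, |G N t * (MvPolynomial.eval (φ x₀ t) (c i) * G (j i) t)| :=
            Finset.abs_sum_le_sum_abs _ _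
        _ ≤ ∑ i, |MvPolynomial.eval (φ x₀ t) (c i)| * w t := by
            apply Finset.sum_le_sum
            intro i _
            have : |G N t * (MvPolynomial.eval (φ x₀ t) (c i) * G (j i) t)|
                = |MvPolynomial.eval (φ x₀ t) (c i)| * |G N t * G (j i) t| := by
              rw [← abs_mul]; congr 1; ring
            rw [this]
            apply mul_le_mul_of_nonneg_left _ (abs_nonneg _)
            exact hprod N (Finset.mem_range.mpr (Nat.lt_succ_self N)) (j i)
              (Finset.mem_range.mpr (Nat.lt_succ_of_le (hjle i)))
        _ = u t * w t := by rw [hu]; simp only []; rw [Finset.sum_mul]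
        _ ≤ M * w t := mul_le_mul_of_nonneg_right (hz ht) (hwnonneg t)
    calc |w' t| ≤ ∑ k ∈ Finset.range (N+1), |2 * G k t * G (k+1) t| :=
          Finset.abs_sum_le_sum_abs _ _
      _ = (∑ k ∈ Finset.range N, |2 * G k t * G (k+1) t|) + |2 * G N t * G (N+1) t| :=
          Finset.sum_range_succ _ _
      _ ≤ (∑ _k ∈ Finset.range N, 2 * w t) + 2 * (M * w t) := by
          apply add_le_add
          · apply Finset.sum_le_sum
            intro k hk
            have h2 : |2 * G k t * G (k+1) t| = 2 * |G k t * G (k+1) t| := by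
              rw [mul_assoc, abs_mul, abs_two]
            rw [h2]
            have := hprod k (Finset.mem_range.mpr ((Finset.mem_range.mp hk).trans (Nat.lt_succ_self N)))
              (k+1) (Finset.mem_range.mpr (Nat.succ_lt_succ (Finset.mem_range.mp hk)))
            linarith
          · have h2 : |2 * G N t * G (N+1) t| = 2 * |G N t * G (N+1) t| := by
              rw [mul_assoc, abs_mul, abs_two]
            rw [h2]
            linarith [hlast]
      _ = K * w t := by
          rw [Finset.sum_const, Finset.card_range]
          rw [hK]
          push_cast
          ring
  -- Gronwall forward
  have hfwd : ∀ t ∈ Set.Icc (0:ℝ) b, w t = 0 := by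
    intro t ht
    have := norm_le_gronwallBound_of_norm_deriv_right_le (f := w) (f' := w')
      (δ := 0) (K := K) (ε := 0) (a := 0) (b := b)
      (HasDerivAt.continuousOn (fun x _ => hw' x))
      (fun x _ => (hw' x).hasDerivWithinAt)
      (by simp [hw0])
      (fun x hx => by
        have hx' : x ∈ Set.Icc (-b) b := ⟨by linarith [hx.1], le_of_lt hx.2⟩
        have := hbound x hx'
        rw [Real.norm_eq_abs, Real.norm_eq_abs, abs_of_nonneg (hwnonneg x)]
        linarith)
      t ht
    rw [gronwallBound_ε0] at this
    simp only [zero_mul] at this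
    have habs : |w t| ≤ 0 := by rwa [Real.norm_eq_abs] at this
    exact le_antisymm (le_trans (le_abs_self _) habs) (hwnonneg t)
  -- Gronwall backward
  have hbwd : ∀ t ∈ Set.Icc (0:ℝ) b, w (-t) = 0 := by
    intro t ht
    set w2 : ℝ → ℝ := fun s => w (-s) with hw2
    have hw2' : ∀ s : ℝ, HasDerivAt w2 (w' (-s) * (-1)) s := by
      intro s
      exact (hw' (-s)).comp s (hasDerivAt_neg s)
    have := norm_le_gronwallBound_of_norm_deriv_right_le (f := w2)
      (f' := fun s => w' (-s) * (-1))
      (δ := 0) (K := K) (ε := 0) (a := 0) (b := b)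
      (HasDerivAt.continuousOn (fun x _ => hw2' x))
      (fun x _ => (hw2' x).hasDerivWithinAt)
      (by simp [hw2, hw0])
      (fun x hx => by
        have hx' : -x ∈ Set.Icc (-b) b := ⟨by linarith [hx.2], by linarith [hx.1]⟩
        have := hbound (-x) hx'
        rw [Real.norm_eq_abs, Real.norm_eq_abs]
        have : |w' (-x) * (-1)| = |w' (-x)| := by rw [abs_mul]; simp
        rw [this, hw2]
        simp only []
        rw [abs_of_nonneg (hwnonneg (-x))]
        linarith [hbound (-x) hx'])
      t ht
    rw [gronwallBound_ε0] at this
    simp only [zero_mul] at this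
    have habs : |w2 t| ≤ 0 := by rwa [Real.norm_eq_abs] at this
    have := le_antisymm (le_trans (le_abs_self _) habs) (hwnonneg (-t))
    exact this
  intro t ht
  rcases le_or_gt 0 t with h | h
  · exact hfwd t ⟨h, ht.2⟩
  · have := hbwd (-t) ⟨by linarith, by linarith [ht.1]⟩
    rwa [neg_neg] at this

/-- Characterization of the backward immediate-entry sets of `{p > 0}` and `{p ≥ 0}`
via Lie derivatives with alternating signs. -/
theorem ivin_set_atomic_characterization
    {n : ℕ} (f : Fin n → MvPolynomial (Fin n) ℝ) (p : MvPolynomial (Fin n) ℝ)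
    (φ : (Fin n → ℝ) → ℝ → (Fin n → ℝ)) (hφ : IsPolyFlow f φ) :
    IvInSet φ {x | 0 < MvPolynomial.eval x p}
      = {x | ∃ k : ℕ, (∀ j < k, MvPolynomial.eval x (lieIter f j p) = 0) ∧
            0 < (-1 : ℝ) ^ k * MvPolynomial.eval x (lieIter f k p)} ∧
    IvInSet φ {x | 0 ≤ MvPolynomial.eval x p}
      = {x | ∃ k : ℕ, (∀ j < k, MvPolynomial.eval x (lieIter f j p) = 0) ∧
            0 < (-1 : ℝ) ^ k * MvPolynomial.eval x (lieIter f k p)} ∪ Gamma0 f p := by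
  classical
  set S : Set (Fin n → ℝ) :=
    {x | ∃ k : ℕ, (∀ j < k, MvPolynomial.eval x (lieIter f j p) = 0) ∧
        0 < (-1 : ℝ) ^ k * MvPolynomial.eval x (lieIter f k p)} with hS
  have main : ∀ x₀ : Fin n → ℝ,
      (x₀ ∈ IvInSet φ {x | 0 < MvPolynomial.eval x p} ↔ x₀ ∈ S) ∧
      (x₀ ∈ IvInSet φ {x | 0 ≤ MvPolynomial.eval x p} ↔ x₀ ∈ S ∪ Gamma0 f p) := by
    intro x₀
    set G : ℕ → ℝ → ℝ := fun k t => MvPolynomial.eval (φ x₀ t) (lieIter f k p) with hG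
    have hlis : ∀ k, lieIter f (k+1) p = lieDeriv f (lieIter f k p) := fun k => rfl
    have hd : ∀ k t, HasDerivAt (G k) (G (k+1) t) t := by
      intro k t
      rw [hG]
      simp only []
      rw [hlis k]
      exact eval_flow_hasDerivAt hφ x₀ (lieIter f k p) t
    have hG0 : ∀ k, G k 0 = MvPolynomial.eval x₀ (lieIter f k p) := by
      intro k; rw [hG]; simp only []; rw [hφ.1]
    have hGp : ∀ t, G 0 t = MvPolynomial.eval (φ x₀ t) p := fun t => rfl
    by_cases hall : ∀ k, MvPolynomial.eval x₀ (lieIter f k p) = 0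
    · -- Gamma0 case
      have hzero : ∀ t, MvPolynomial.eval (φ x₀ t) p = 0 := gamma0_invariant hφ p x₀ hall
      have hnotS : x₀ ∉ S := by
        rintro ⟨k, -, hk2⟩
        rw [hall k, mul_zero] at hk2
        exact lt_irrefl 0 hk2
      constructor
      · constructor
        · rintro ⟨ε, εpos, h⟩
          have := h (ε/2) ⟨half_pos εpos, half_lt_self εpos⟩
          rw [Set.mem_setOf_eq, hzero] at this
          exact absurd this (lt_irrefl 0)
        · intro h; exact absurd h hnotS
      · constructor
        · intro _; exact Or.inr hall
        · intro _
          exact ⟨1, one_pos, fun t _ => by rw [Set.mem_setOf_eq, hzero]⟩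
    · push_neg at hall
      set k := Nat.find hall with hkdef
      have hk : MvPolynomial.eval x₀ (lieIter f k p) ≠ 0 := Nat.find_spec hall
      have h0 : ∀ j < k, MvPolynomial.eval x₀ (lieIter f j p) = 0 := by
        intro j hj
        have := Nat.find_min hall hj
        exact not_not.mp this
      obtain ⟨ε, εpos, hsign⟩ := sign_lemma k G hd
        (fun j hj => by rw [hG0]; exact h0 j hj) (by rw [hG0]; exact hk)
      set a := MvPolynomial.eval x₀ (lieIter f k p) with ha
      set e : ℝ := (-1:ℝ)^k * a with he
      have hSiff : x₀ ∈ S ↔ 0 < e := by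
        constructor
        · rintro ⟨k', h1', h2'⟩
          have hkk : k' = k := by
            rcases lt_trichotomy k' k with h | h | h
            · rw [h0 k' h, mul_zero] at h2'
              exact absurd h2' (lt_irrefl 0)
            · exact h
            · exact absurd (h1' k h) hk
          rw [hkk] at h2'
          exact h2'
        · intro h
          exact ⟨k, h0, h⟩
      have hGsign : ∀ t ∈ Set.Ioo (0:ℝ) ε, 0 < e * G 0 (-t) := by
        intro t ht
        have := (hsign t ht).2
        rw [hG0 k, ← ha] at this
        rw [he]
        nlinarith [this]
      have hnotGamma : x₀ ∉ Gamma0 f p := fun h => hk (h k)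
      rcases (show e ≠ 0 by
          rw [he]
          exact mul_ne_zero (pow_ne_zero _ (by norm_num)) hk).lt_or_gt with hneg | hpos
      · -- e < 0 : trajectory is negative; not in either IvInSet
        have hGneg : ∀ t ∈ Set.Ioo (0:ℝ) ε, G 0 (-t) < 0 := by
          intro t ht
          have h1 := hGsign t ht
          rcases mul_pos_iff.mp h1 with ⟨h2, _⟩ | ⟨_, h3⟩
          · exact absurd h2 (not_lt.mpr hneg.le)
          · exact h3
        have hnotIv : ∀ A : Set (Fin n → ℝ),
            (∀ y ∈ A, 0 ≤ MvPolynomial.eval y p) → x₀ ∉ IvInSet φ A := by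
          rintro A hA ⟨δ, δpos, hδ⟩
          set t := min ε δ / 2 with htdef
          have ht1 : t ∈ Set.Ioo (0:ℝ) ε := by
            constructor
            · positivity
            · have := min_le_left ε δ; nlinarith
          have ht2 : t ∈ Set.Ioo (0:ℝ) δ := by
            constructor
            · positivity
            · have := min_le_right ε δ; nlinarith
          have h1 := hA _ (hδ t ht2)
          have h2 := hGneg t ht1
          rw [hGp] at h2
          exact absurd h1 (not_le.mpr h2)
        have hnS : x₀ ∉ S := fun h => absurd (hSiff.mp h) (not_lt.mpr hneg.le)
        constructor
        · constructor
          · intro h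
            exact absurd h (hnotIv _ fun y hy => le_of_lt hy)
          · intro h; exact absurd h hnS
        · constructor
          · intro h
            exact absurd h (hnotIv _ fun y hy => hy)
          · rintro (h | h)
            · exact absurd h hnS
            · exact absurd h hnotGamma
      · -- 0 < e : trajectory positive
        have hGpos : ∀ t ∈ Set.Ioo (0:ℝ) ε, 0 < G 0 (-t) := by
          intro t ht
          have h1 := hGsign t ht
          rcases mul_pos_iff.mp h1 with ⟨_, h2⟩ | ⟨h3, _⟩
          · exact h2
          · exact absurd h3 (not_lt.mpr hpos.le)
        have hIn : x₀ ∈ IvInSet φ {x | 0 < MvPolynomial.eval x p} := by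
          refine ⟨ε, εpos, fun t ht => ?_⟩
          rw [Set.mem_setOf_eq, ← hGp]
          exact hGpos t ht
        have hIn' : x₀ ∈ IvInSet φ {x | 0 ≤ MvPolynomial.eval x p} := by
          refine ⟨ε, εpos, fun t ht => ?_⟩
          rw [Set.mem_setOf_eq, ← hGp]
          exact (hGpos t ht).le
        have hinS : x₀ ∈ S := hSiff.mpr hpos
        exact ⟨⟨fun _ => hinS, fun _ => hIn⟩, ⟨fun _ => Or.inl hinS, fun _ => hIn'⟩⟩
  exact ⟨Set.ext fun x₀ => (main x₀).1, Set.ext fun x₀ => (main x₀).2⟩
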